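/- Let V: X → ℝ with X ⊆ ℤ^I finite, p ∈ ℝ^I, and let x' be an extreme point of the convex hull of D(p) = argmax_{x ∈ X}{V(x) − p·x}. Then for every ε > 0 there exists s ∈ ℝ^I with ‖s‖ < ε such that D(p + s) = {x'}. -/

import Mathlib

def DemandZ (n : ℕ) (X : Finset (Fin n → ℤ)) (V : (Fin n → ℤ) → ℝ) (p : Fin n → ℝ) :
    Set (Fin n → ℤ) :=
  {x | x ∈ X ∧ ∀ y ∈ X, V y - ∑ i, p i * (y i : ℝ) ≤ V x - ∑ i, p i * (x i : ℝ)}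

/-- Any extreme point of the demand polytope can be made uniquely demanded by an
arbitrarily small price perturbation. -/
theorem extreme_point_uniquely_demanded (n : ℕ) (X : Finset (Fin n → ℤ))
    (V : (Fin n → ℤ) → ℝ) (p : Fin n → ℝ) (x' : Fin n → ℤ)
    (hx' : (fun i => ((x' i : ℝ))) ∈ Set.extremePoints ℝ
      (convexHull ℝ ((fun (y : Fin n → ℤ) (i : Fin n) => (y i : ℝ)) '' DemandZ n X V p))) :
    ∀ ε > 0, ∃ s : Fin n → ℝ, ‖s‖ < ε ∧ DemandZ n X V (p + s) = {x'} := by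
  classical
  intro ε hε
  set cast : (Fin n → ℤ) → (Fin n → ℝ) := fun y i => (y i : ℝ) with hcast
  have hinj : Function.Injective cast := by
    intro a b hab
    funext i
    have h2 : ((a i : ℝ)) = (b i : ℝ) := congrFun hab i
    exact_mod_cast h2
  set D : Set (Fin n → ℤ) := DemandZ n X V p with hD
  set Dr : Set (Fin n → ℝ) := cast '' D with hDr
  -- x' is in the demand set
  have hx'Dr : cast x' ∈ Dr := extremePoints_convexHull_subset hx'
  have hx'D : x' ∈ D := by
    obtain ⟨y, hy, hyc⟩ := hx'Dr
    rwa [← hinj hyc]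
  have hx'X : x' ∈ X := hx'D.1
  -- D is finite
  have hDfin : D.Finite := Set.Finite.subset X.finite_toSet (fun y hy => hy.1)
  have hDrfin : Dr.Finite := hDfin.image _
  -- x' is not in the hull of the other demand points
  have hnot : cast x' ∉ convexHull ℝ (Dr \ {cast x'}) := by
    intro h
    have hconv := ((convex_convexHull ℝ Dr).mem_extremePoints_iff_convex_diff.1 hx').2
    have hsub : Dr \ {cast x'} ⊆ convexHull ℝ Dr \ {cast x'} := by
      intro z hz
      exact ⟨subset_convexHull ℝ Dr hz.1, hz.2⟩
    have := convexHull_min hsub hconv h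
    exact this.2 rfl
  -- separate
  obtain ⟨f, u, hfu, hub⟩ := geometric_hahn_banach_point_closed
    (convex_convexHull ℝ _) (((hDrfin.diff (t := {cast x'})).isCompact_convexHull (𝕜 := ℝ)).isClosed) hnot
  set w : Fin n → ℝ := fun i => f (Pi.single i 1) with hw
  have hf : ∀ v : Fin n → ℝ, f v = ∑ i, w i * v i := by
    intro v
    have hv : v = ∑ i, Pi.single i (v i) := (Finset.univ_sum_single v).symm
    conv_lhs => rw [hv]
    rw [map_sum]
    refine Finset.sum_congr rfl fun i _ => ?_
    have h1 : Pi.single i (v i) = v i • (Pi.single i (1 : ℝ) : Fin n → ℝ) := by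
      rw [← Pi.single_smul' i (v i) (1 : ℝ), smul_eq_mul, mul_one]
    rw [h1, map_smul, smul_eq_mul, mul_comm]
  -- base utility
  set util : (Fin n → ℤ) → ℝ := fun y => V y - ∑ i, p i * (y i : ℝ) with hutil
  have hgap : ∀ y ∈ X, y ∉ D → util y < util x' := by
    intro y hyX hyD
    by_contra hle
    push_neg at hle
    exact hyD ⟨hyX, fun z hz => le_trans (hx'D.2 z hz) hle⟩
  -- choose δ
  obtain ⟨δ, hδpos, hδgap, hδε⟩ :
      ∃ δ : ℝ, 0 < δ ∧ (∀ y ∈ X, y ∉ D →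
        δ * |f (cast y) - f (cast x')| < util x' - util y) ∧ δ * ‖w‖ < ε := by
    set M : ℝ := X.sup' ⟨x', hx'X⟩ (fun y => |f (cast y) - f (cast x')|) with hM
    have hMnn : 0 ≤ M :=
      le_trans (abs_nonneg (f (cast x') - f (cast x')))
        (Finset.le_sup' (fun y => |f (cast y) - f (cast x')|) hx'X)
    set S : Finset (Fin n → ℤ) := X.filter (fun y => y ∉ D) with hS
    by_cases hSne : S.Nonempty
    · set g : ℝ := S.inf' hSne (fun y => util x' - util y) with hg
      have hgpos : 0 < g := by
        rw [hg, Finset.lt_inf'_iff]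
        intro y hy
        rw [hS, Finset.mem_filter] at hy
        exact sub_pos.2 (hgap y hy.1 hy.2)
      refine ⟨min (ε / (2 * (‖w‖ + 1))) (g / (2 * (M + 1))), ?_, ?_, ?_⟩
      · have h1 : 0 < ε / (2 * (‖w‖ + 1)) := by positivity
        have h2 : 0 < g / (2 * (M + 1)) := by positivity
        exact lt_min h1 h2
      · intro y hyX hyD
        have hyS : y ∈ S := by rw [hS, Finset.mem_filter]; exact ⟨hyX, hyD⟩
        have hyM : |f (cast y) - f (cast x')| ≤ M :=
          Finset.le_sup' (fun y => |f (cast y) - f (cast x')|) hyX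
        have hyg : g ≤ util x' - util y := Finset.inf'_le _ hyS
        have habs : 0 ≤ |f (cast y) - f (cast x')| := abs_nonneg _
        calc min (ε / (2 * (‖w‖ + 1))) (g / (2 * (M + 1))) * |f (cast y) - f (cast x')|
            ≤ g / (2 * (M + 1)) * M := by
              apply mul_le_mul (min_le_right _ _) hyM habs (by positivity)
          _ < g := by
              rw [div_mul_eq_mul_div, div_lt_iff₀ (by positivity)]
              nlinarith
          _ ≤ util x' - util y := hyg
      · have hwnn : 0 ≤ ‖w‖ := norm_nonneg _
        calc min (ε / (2 * (‖w‖ + 1))) (g / (2 * (M + 1))) * ‖w‖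
            ≤ ε / (2 * (‖w‖ + 1)) * ‖w‖ := by
              apply mul_le_mul_of_nonneg_right (min_le_left _ _) hwnn
          _ < ε := by
              rw [div_mul_eq_mul_div, div_lt_iff₀ (by positivity)]
              nlinarith
    · refine ⟨ε / (2 * (‖w‖ + 1)), by positivity, ?_, ?_⟩
      · intro y hyX hyD
        exact absurd ⟨y, by rw [hS, Finset.mem_filter]; exact ⟨hyX, hyD⟩⟩ hSne
      · have hwnn : 0 ≤ ‖w‖ := norm_nonneg _
        rw [div_mul_eq_mul_div, div_lt_iff₀ (by positivity)]
        nlinarith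
  refine ⟨δ • w, ?_, ?_⟩
  · rw [norm_smul, Real.norm_eq_abs, abs_of_pos hδpos]
    exact hδε
  -- the perturbed utility
  have hputil : ∀ y : Fin n → ℤ,
      V y - ∑ i, (p + δ • w) i * (y i : ℝ) = util y - δ * f (cast y) := by
    intro y
    rw [hf]
    simp only [Pi.add_apply, Pi.smul_apply, smul_eq_mul, hutil]
    rw [Finset.mul_sum]
    have : ∀ i ∈ Finset.univ, (p i + δ * w i) * (y i : ℝ)
        = p i * (y i : ℝ) + δ * (w i * (cast y i)) := by
      intro i _
      simp only [hcast]
      ring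
    rw [Finset.sum_congr rfl this, Finset.sum_add_distrib]
    ring
  -- x' strictly beats everyone
  have hstrict : ∀ y ∈ X, y ≠ x' →
      util y - δ * f (cast y) < util x' - δ * f (cast x') := by
    intro y hyX hyne
    by_cases hyD : y ∈ D
    · have hyDr : cast y ∈ Dr \ {cast x'} :=
        ⟨⟨y, hyD, rfl⟩, fun h => hyne (hinj h)⟩
      have h1 : u < f (cast y) := hub _ (subset_convexHull ℝ _ hyDr)
      have h2 : f (cast x') < f (cast y) := lt_trans hfu h1
      have heq : util y = util x' :=
        le_antisymm (hx'D.2 y hyX) (hyD.2 x' hx'X)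
      rw [heq]
      have := mul_lt_mul_of_pos_left h2 hδpos
      linarith
    · have h1 := hδgap y hyX hyD
      have h2 : δ * (f (cast x') - f (cast y)) ≤ δ * |f (cast y) - f (cast x')| := by
        apply mul_le_mul_of_nonneg_left _ (le_of_lt hδpos)
        rw [abs_sub_comm]
        exact le_abs_self _
      have := lt_of_le_of_lt h2 h1
      linarith
  -- conclude
  ext y
  simp only [Set.mem_singleton_iff]
  constructor
  · rintro ⟨hyX, hymax⟩
    by_contra hyne
    have h1 := hymax x' hx'X
    rw [hputil, hputil] at h1
    exact absurd h1 (not_le.2 (hstrict y hyX hyne))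
  · intro hy
    rw [hy]
    refine ⟨hx'X, fun z hzX => ?_⟩
    rw [hputil, hputil]
    by_cases hz : z = x'
    · rw [hz]
    · exact le_of_lt (hstrict z hzX hz)
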